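/- Let a_{ij}(p) := (δ_{ij} + p_i p_j)/p0 with p0 = sqrt(1+|p|^2). Then for all p ∈ ℝ^d, Σ_{k,l,i,j=1}^d p0^2 (δ_{kl} − p_k p_l/p0^2)(δ_{ij} − p_i p_j/p0^2) ((I+p⊗p)∇_p a_{lj}) ⊗ ((I+p⊗p)∇_p a_{ki}) = d(I + p⊗p) − (d−2) I − (2/p0^2)(I + p⊗p); in particular this matrix is ≤ d (I + p⊗p) in the Loewner order. -/

import Mathlib

/-- The entries `a_{ij}(p) = (δ_{ij} + p_i p_j)/p₀` of `D(p) = (I + p⊗p)/p₀`. -/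
noncomputable def aEntry (d : ℕ) (i j : Fin d) (q : EuclideanSpace ℝ (Fin d)) : ℝ :=
  ((if i = j then (1 : ℝ) else 0) + q i * q j) / Real.sqrt (1 + ‖q‖ ^ 2)

/-- The gradient `∇_p a_{ij}` as a vector in `ℝ^d`. -/
noncomputable def gradA (d : ℕ) (i j : Fin d) (p : EuclideanSpace ℝ (Fin d)) : Fin d → ℝ :=
  fun m => fderiv ℝ (aEntry d i j) p (EuclideanSpace.single m 1)

section
variable {d : ℕ}

lemma p0_pos (p : EuclideanSpace ℝ (Fin d)) : 0 < Real.sqrt (1 + ‖p‖ ^ 2) :=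
  Real.sqrt_pos.mpr (by positivity)

lemma sq_p0 (p : EuclideanSpace ℝ (Fin d)) :
    Real.sqrt (1 + ‖p‖ ^ 2) ^ 2 = 1 + ‖p‖ ^ 2 :=
  Real.sq_sqrt (by positivity)

lemma hasFDerivAt_aEntry (i j : Fin d) (p : EuclideanSpace ℝ (Fin d)) :
    HasFDerivAt (aEntry d i j)
      ((Real.sqrt (1 + ‖p‖ ^ 2))⁻¹ •
          (p j • (EuclideanSpace.proj i : EuclideanSpace ℝ (Fin d) →L[ℝ] ℝ)
            + p i • (EuclideanSpace.proj j : EuclideanSpace ℝ (Fin d) →L[ℝ] ℝ))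
        - (((if i = j then (1:ℝ) else 0) + p i * p j) / Real.sqrt (1 + ‖p‖ ^ 2) ^ 3) •
          (innerSL ℝ p : EuclideanSpace ℝ (Fin d) →L[ℝ] ℝ)) p := by
  have hp0 := p0_pos p
  have hg : HasFDerivAt (fun q : EuclideanSpace ℝ (Fin d) => (if i = j then (1:ℝ) else 0) + q i * q j)
      (p j • (EuclideanSpace.proj i : EuclideanSpace ℝ (Fin d) →L[ℝ] ℝ)
        + p i • (EuclideanSpace.proj j : EuclideanSpace ℝ (Fin d) →L[ℝ] ℝ)) p := by
    have h1 := (EuclideanSpace.proj i (𝕜 := ℝ)).hasFDerivAt (x := p)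
    have h2 := (EuclideanSpace.proj j (𝕜 := ℝ)).hasFDerivAt (x := p)
    have := (hasFDerivAt_const (if i = j then (1:ℝ) else 0) p).add (h1.mul h2)
    refine this.congr_fderiv ?_
    ext v
    simp only [ContinuousLinearMap.add_apply, ContinuousLinearMap.smul_apply,
      ContinuousLinearMap.zero_apply, PiLp.proj_apply, smul_eq_mul, zero_add]
    ring
  have hn : HasFDerivAt (fun q : EuclideanSpace ℝ (Fin d) => (1:ℝ) + ‖q‖ ^ 2)
      (2 • (innerSL ℝ p : EuclideanSpace ℝ (Fin d) →L[ℝ] ℝ)) p := by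
    have := (hasFDerivAt_id p).norm_sq
    have h := (hasFDerivAt_const (1:ℝ) p).add this
    exact h.congr_fderiv (by ext v; simp)
  have hs : HasFDerivAt (fun q : EuclideanSpace ℝ (Fin d) => Real.sqrt (1 + ‖q‖ ^ 2))
      ((1 / (2 * Real.sqrt (1 + ‖p‖ ^ 2))) • (2 • (innerSL ℝ p : EuclideanSpace ℝ (Fin d) →L[ℝ] ℝ))) p :=
    (Real.hasDerivAt_sqrt (by positivity)).comp_hasFDerivAt p hn
  have hinv : HasFDerivAt (fun q : EuclideanSpace ℝ (Fin d) => (Real.sqrt (1 + ‖q‖ ^ 2))⁻¹)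
      ((-(Real.sqrt (1 + ‖p‖ ^ 2) ^ 2)⁻¹) •
        ((1 / (2 * Real.sqrt (1 + ‖p‖ ^ 2))) • (2 • (innerSL ℝ p : EuclideanSpace ℝ (Fin d) →L[ℝ] ℝ)))) p :=
    (hasDerivAt_inv hp0.ne').comp_hasFDerivAt p hs
  have hmul := hg.mul hinv
  have : aEntry d i j = fun q : EuclideanSpace ℝ (Fin d) =>
      ((if i = j then (1:ℝ) else 0) + q i * q j) * (Real.sqrt (1 + ‖q‖ ^ 2))⁻¹ := by
    funext q; simp [aEntry, div_eq_mul_inv]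
  rw [this]
  refine hmul.congr_fderiv ?_
  ext v
  have h2 := sq_p0 p
  simp only [ContinuousLinearMap.sub_apply, ContinuousLinearMap.smul_apply,
    ContinuousLinearMap.add_apply, smul_eq_mul]
  set s := Real.sqrt (1 + ‖p‖ ^ 2) with hs
  simp only [nsmul_eq_mul, Nat.cast_ofNat]
  field_simp
  ring
end

lemma norm_sq_eq (p : EuclideanSpace ℝ (Fin d)) : ∑ m, p m * p m = ‖p‖ ^ 2 := by
  rw [EuclideanSpace.norm_eq, Real.sq_sqrt (by positivity)]
  exact Finset.sum_congr rfl fun m _ => by rw [Real.norm_eq_abs, sq_abs, sq]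

lemma gradA_eq (i j : Fin d) (p : EuclideanSpace ℝ (Fin d)) (m : Fin d) :
    gradA d i j p m =
      ((if i = m then (1:ℝ) else 0) * p j + (if j = m then 1 else 0) * p i) / Real.sqrt (1 + ‖p‖ ^ 2)
        - ((if i = j then (1:ℝ) else 0) + p i * p j) * p m / Real.sqrt (1 + ‖p‖ ^ 2) ^ 3 := by
  rw [gradA, (hasFDerivAt_aEntry i j p).fderiv]
  simp only [ContinuousLinearMap.sub_apply, ContinuousLinearMap.smul_apply,
    ContinuousLinearMap.add_apply, smul_eq_mul, PiLp.proj_apply,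
    innerSL_apply_apply, EuclideanSpace.inner_single_right, EuclideanSpace.single_apply, map_one,
    RingHom.id_apply, starRingEnd_apply, star_trivial, one_mul]
  have : (if i = m then (1:ℝ) else 0) = (if m = i then (1:ℝ) else 0) := by
    by_cases h : i = m <;> simp [h, eq_comm]
  have h2 : (if j = m then (1:ℝ) else 0) = (if m = j then (1:ℝ) else 0) := by
    by_cases h : j = m <;> simp [h, eq_comm]
  rw [this, h2]
  field_simp

/-- `w i j n = (I+p⊗p)∇a_{ij}` times `p₀`. -/
def wv (p : EuclideanSpace ℝ (Fin d)) (i j n : Fin d) : ℝ :=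
  (if i = n then (1:ℝ) else 0) * p j + (if j = n then 1 else 0) * p i
    + p n * (p i * p j - if i = j then 1 else 0)

lemma mulVec_gradA (i j : Fin d) (p : EuclideanSpace ℝ (Fin d)) (n : Fin d) :
    ∑ m, ((if n = m then (1:ℝ) else 0) + p n * p m) * gradA d i j p m
      = wv p i j n / Real.sqrt (1 + ‖p‖ ^ 2) := by
  have hr := norm_sq_eq p
  have hs2 := sq_p0 p
  have hs0 := (p0_pos p).ne'
  set s := Real.sqrt (1 + ‖p‖ ^ 2) with hs
  calc ∑ m, ((if n = m then (1:ℝ) else 0) + p n * p m) * gradA d i j p m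
      = ∑ m, ((if n = m then gradA d i j p m else 0)
          + ((if i = m then p n * p m * p j / s else 0)
            + (if j = m then p n * p m * p i / s else 0)
            - (p m * p m) * (p n * ((if i = j then (1:ℝ) else 0) + p i * p j) / s ^ 3))) := by
        refine Finset.sum_congr rfl fun m _ => ?_
        rw [gradA_eq, ← hs]
        split_ifs <;> ring
    _ = gradA d i j p n + (p n * p i * p j / s + p n * p j * p i / s
          - ‖p‖ ^ 2 * (p n * ((if i = j then (1:ℝ) else 0) + p i * p j) / s ^ 3)) := by
        rw [Finset.sum_add_distrib, Finset.sum_ite_eq, Finset.sum_sub_distrib,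
          Finset.sum_add_distrib, Finset.sum_ite_eq, Finset.sum_ite_eq, ← Finset.sum_mul, hr]
        simp
    _ = wv p i j n / s := by
        rw [gradA_eq, ← hs, wv]
        have hrs : ‖p‖ ^ 2 = s ^ 2 - 1 := by rw [hs2]; ring
        rw [hrs]
        field_simp
        ring

lemma sumA (p : EuclideanSpace ℝ (Fin d)) (l i m : Fin d) :
    ∑ j, ((if i = j then (1:ℝ) else 0) - p i * p j / (1 + ‖p‖ ^ 2)) * wv p l j m
      = ((if l = m then (1:ℝ) else 0) * p i + p m * p l * p i) / (1 + ‖p‖ ^ 2)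
        + (if i = m then (1:ℝ) else 0) * p l - p m * (if l = i then (1:ℝ) else 0) := by
  have hr := norm_sq_eq p
  have hT : (0:ℝ) < 1 + ‖p‖ ^ 2 := by positivity
  calc ∑ j, ((if i = j then (1:ℝ) else 0) - p i * p j / (1 + ‖p‖ ^ 2)) * wv p l j m
      = ∑ j, ((if i = j then wv p l j m else 0)
        + ((p j * p j) * (-(p i / (1 + ‖p‖ ^ 2)) * ((if l = m then (1:ℝ) else 0) + p m * p l))
        + ((if j = m then -(p i / (1 + ‖p‖ ^ 2)) * (p j * p l) else 0)
        + (if l = j then p i / (1 + ‖p‖ ^ 2) * (p m * p j) else 0)))) := by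
        refine Finset.sum_congr rfl fun j _ => ?_
        simp only [wv]
        split_ifs <;> ring
    _ = _ := by
        rw [Finset.sum_add_distrib, Finset.sum_ite_eq, Finset.sum_add_distrib, ← Finset.sum_mul,
          Finset.sum_add_distrib, Finset.sum_ite_eq', Finset.sum_ite_eq, hr]
        simp only [Finset.mem_univ, if_true, wv]
        split_ifs <;> (try field_simp) <;> (try ring)

lemma sumB (p : EuclideanSpace ℝ (Fin d)) (k i m : Fin d) :
    ∑ l, ((if k = l then (1:ℝ) else 0) - p k * p l / (1 + ‖p‖ ^ 2)) *
        (((if l = m then (1:ℝ) else 0) * p i + p m * p l * p i) / (1 + ‖p‖ ^ 2)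
          + (if i = m then (1:ℝ) else 0) * p l - p m * (if l = i then (1:ℝ) else 0))
      = ((if k = m then (1:ℝ) else 0) * p i + p m * p k * p i
          + (if i = m then (1:ℝ) else 0) * p k) / (1 + ‖p‖ ^ 2)
        - p m * (if k = i then (1:ℝ) else 0) := by
  have hr := norm_sq_eq p
  have hT : (0:ℝ) < 1 + ‖p‖ ^ 2 := by positivity
  calc ∑ l, ((if k = l then (1:ℝ) else 0) - p k * p l / (1 + ‖p‖ ^ 2)) *
        (((if l = m then (1:ℝ) else 0) * p i + p m * p l * p i) / (1 + ‖p‖ ^ 2)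
          + (if i = m then (1:ℝ) else 0) * p l - p m * (if l = i then (1:ℝ) else 0))
      = ∑ l, ((if k = l then (((if l = m then (1:ℝ) else 0) * p i + p m * p l * p i) / (1 + ‖p‖ ^ 2)
          + (if i = m then (1:ℝ) else 0) * p l - p m * (if l = i then (1:ℝ) else 0)) else 0)
        + ((p l * p l) * (-(p k / (1 + ‖p‖ ^ 2)) *
              (p m * p i / (1 + ‖p‖ ^ 2) + (if i = m then (1:ℝ) else 0)))
        + ((if l = m then -(p k / (1 + ‖p‖ ^ 2)) * (p l * p i / (1 + ‖p‖ ^ 2)) else 0)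
        + (if l = i then p k / (1 + ‖p‖ ^ 2) * (p m * p l) else 0)))) := by
        refine Finset.sum_congr rfl fun l _ => ?_
        split_ifs <;> ring
    _ = _ := by
        rw [Finset.sum_add_distrib, Finset.sum_ite_eq, Finset.sum_add_distrib, ← Finset.sum_mul,
          Finset.sum_add_distrib, Finset.sum_ite_eq', Finset.sum_ite_eq', hr]
        simp only [Finset.mem_univ, if_true]
        split_ifs <;> (try field_simp) <;> (try ring)

lemma sumC1 (p : EuclideanSpace ℝ (Fin d)) (k m n : Fin d) :
    ∑ i, (((if k = m then (1:ℝ) else 0) * p i + p m * p k * p i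
          + (if i = m then (1:ℝ) else 0) * p k) / (1 + ‖p‖ ^ 2)
        - p m * (if k = i then (1:ℝ) else 0)) * wv p k i n
      = (p k / (1 + ‖p‖ ^ 2)) * (((if k = n then (1:ℝ) else 0) + p n * p k) * p m
            + p k * (if m = n then (1:ℝ) else 0) + (-(p n)) * (if k = m then (1:ℝ) else 0))
        + p k * ((((if k = m then (1:ℝ) else 0) + p m * p k) / (1 + ‖p‖ ^ 2)) * p n
            + (-(p m)) * (if k = n then (1:ℝ) else 0))
        + ((((if k = m then (1:ℝ) else 0) + p m * p k) / (1 + ‖p‖ ^ 2)) * (-(p n)) * p k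
            + p k * (-(p m)) * ((if k = n then (1:ℝ) else 0) + p n * p k)
            + (-(p m)) * (-(p n)))
        + ‖p‖ ^ 2 * ((((if k = m then (1:ℝ) else 0) + p m * p k) / (1 + ‖p‖ ^ 2))
            * ((if k = n then (1:ℝ) else 0) + p n * p k)) := by
  have hr := norm_sq_eq p
  calc ∑ i, (((if k = m then (1:ℝ) else 0) * p i + p m * p k * p i
          + (if i = m then (1:ℝ) else 0) * p k) / (1 + ‖p‖ ^ 2)
        - p m * (if k = i then (1:ℝ) else 0)) * wv p k i n
      = ∑ i, ((if i = m then (p k / (1 + ‖p‖ ^ 2)) *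
              ((((if k = n then (1:ℝ) else 0) + p n * p k)) * p i
                + p k * (if i = n then (1:ℝ) else 0) + (-(p n)) * (if k = i then (1:ℝ) else 0))
            else 0)
        + ((if i = n then p k * ((((if k = m then (1:ℝ) else 0) + p m * p k) / (1 + ‖p‖ ^ 2)) * p i
              + (-(p m)) * (if k = i then (1:ℝ) else 0)) else 0)
        + ((if k = i then (((if k = m then (1:ℝ) else 0) + p m * p k) / (1 + ‖p‖ ^ 2)) * (-(p n)) * p i
              + p i * (-(p m)) * ((if k = n then (1:ℝ) else 0) + p n * p k)
              + (-(p m)) * (-(p n)) else 0)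
        + (p i * p i) * ((((if k = m then (1:ℝ) else 0) + p m * p k) / (1 + ‖p‖ ^ 2))
              * ((if k = n then (1:ℝ) else 0) + p n * p k))))) := by
        refine Finset.sum_congr rfl fun i _ => ?_
        simp only [wv]
        split_ifs <;> ring
    _ = _ := by
        rw [Finset.sum_add_distrib, Finset.sum_ite_eq', Finset.sum_add_distrib,
          Finset.sum_add_distrib, Finset.sum_ite_eq', Finset.sum_ite_eq, ← Finset.sum_mul, hr]
        simp only [Finset.mem_univ, if_true]
        ring

lemma sumC (p : EuclideanSpace ℝ (Fin d)) (m n : Fin d) :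
    ∑ k, ∑ i, (((if k = m then (1:ℝ) else 0) * p i + p m * p k * p i
          + (if i = m then (1:ℝ) else 0) * p k) / (1 + ‖p‖ ^ 2)
        - p m * (if k = i then (1:ℝ) else 0)) * wv p k i n
      = 2 * ‖p‖ ^ 2 / (1 + ‖p‖ ^ 2) * (if m = n then (1:ℝ) else 0)
        + ((d : ℝ) - 2 / (1 + ‖p‖ ^ 2)) * (p m * p n) := by
  have hr := norm_sq_eq p
  have hT : (0:ℝ) < 1 + ‖p‖ ^ 2 := by positivity
  rw [Finset.sum_congr rfl fun k _ => sumC1 p k m n]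
  calc ∑ k, ((p k / (1 + ‖p‖ ^ 2)) * (((if k = n then (1:ℝ) else 0) + p n * p k) * p m
            + p k * (if m = n then (1:ℝ) else 0) + (-(p n)) * (if k = m then (1:ℝ) else 0))
        + p k * ((((if k = m then (1:ℝ) else 0) + p m * p k) / (1 + ‖p‖ ^ 2)) * p n
            + (-(p m)) * (if k = n then (1:ℝ) else 0))
        + ((((if k = m then (1:ℝ) else 0) + p m * p k) / (1 + ‖p‖ ^ 2)) * (-(p n)) * p k
            + p k * (-(p m)) * ((if k = n then (1:ℝ) else 0) + p n * p k)
            + (-(p m)) * (-(p n)))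
        + ‖p‖ ^ 2 * ((((if k = m then (1:ℝ) else 0) + p m * p k) / (1 + ‖p‖ ^ 2))
            * ((if k = n then (1:ℝ) else 0) + p n * p k)))
      = ∑ k, ((if k = m then -(p k * p n) / (1 + ‖p‖ ^ 2)
              + ‖p‖ ^ 2 / (1 + ‖p‖ ^ 2) * ((if k = n then (1:ℝ) else 0) + p n * p k) else 0)
        + ((if k = n then p k * p m / (1 + ‖p‖ ^ 2) - 2 * (p m * p k)
              + ‖p‖ ^ 2 * (p m * p k) / (1 + ‖p‖ ^ 2) else 0)
        + ((p k * p k) * (p m * p n / (1 + ‖p‖ ^ 2) + (if m = n then (1:ℝ) else 0) / (1 + ‖p‖ ^ 2)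
              - p m * p n + ‖p‖ ^ 2 * (p m * p n) / (1 + ‖p‖ ^ 2))
        + p m * p n))) := by
        refine Finset.sum_congr rfl fun k _ => ?_
        split_ifs <;> ring
    _ = _ := by
        rw [Finset.sum_add_distrib, Finset.sum_ite_eq', Finset.sum_add_distrib,
          Finset.sum_ite_eq', Finset.sum_add_distrib, ← Finset.sum_mul, hr,
          Finset.sum_const, Finset.card_univ, Fintype.card_fin, nsmul_eq_mul]
        simp only [Finset.mem_univ, if_true]
        split_ifs <;> (try field_simp) <;> (try ring)



/-- The identity
`Σ_{k,l,i,j} p₀² (δ_{kl} − p_k p_l/p₀²)(δ_{ij} − p_i p_j/p₀²)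
   ((I+p⊗p)∇a_{lj}) ⊗ ((I+p⊗p)∇a_{ki}) = d(I+p⊗p) − (d−2) I − (2/p₀²)(I+p⊗p)`,
and this matrix is `≤ d (I + p⊗p)` in the Loewner order. -/
theorem gradA_sum' (d : ℕ) (p : EuclideanSpace ℝ (Fin d)) :
    let p₀ : ℝ := Real.sqrt (1 + ‖p‖ ^ 2)
    let pp : Matrix (Fin d) (Fin d) ℝ := Matrix.vecMulVec (fun m => p m) (fun m => p m)
    let B : Matrix (Fin d) (Fin d) ℝ := 1 + pp
    let S : Matrix (Fin d) (Fin d) ℝ :=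
      ∑ k, ∑ l, ∑ i, ∑ j,
        (p₀ ^ 2 * ((if k = l then 1 else 0) - p k * p l / p₀ ^ 2) *
            ((if i = j then 1 else 0) - p i * p j / p₀ ^ 2)) •
          Matrix.vecMulVec (B.mulVec (gradA d l j p)) (B.mulVec (gradA d k i p))
    S = (d : ℝ) • B - ((d : ℝ) - 2) • (1 : Matrix (Fin d) (Fin d) ℝ) - (2 / p₀ ^ 2) • B
      ∧ Matrix.PosSemidef ((d : ℝ) • B - S) := by
  intro p₀ pp B S
  have hp₀ : p₀ = Real.sqrt (1 + ‖p‖ ^ 2) := rfl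
  have hs2 : p₀ ^ 2 = 1 + ‖p‖ ^ 2 := by rw [hp₀]; exact sq_p0 p
  have hT : (0:ℝ) < 1 + ‖p‖ ^ 2 := by positivity
  have hs0 : p₀ ≠ 0 := by rw [hp₀]; exact (p0_pos p).ne'
  have hB : ∀ a b, B a b = (if a = b then (1:ℝ) else 0) + p a * p b := by
    intro a b
    show ((1 : Matrix (Fin d) (Fin d) ℝ)
        + Matrix.vecMulVec (fun m => p m) (fun m => p m)) a b = _
    simp [Matrix.add_apply, Matrix.one_apply, Matrix.vecMulVec_apply]
  have hW : ∀ i j n, B.mulVec (gradA d i j p) n = wv p i j n / p₀ := by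
    intro i j n
    simp only [Matrix.mulVec, dotProduct, hB]
    rw [hp₀]
    exact mulVec_gradA i j p n
  have key : ∀ A Bq x y : ℝ,
      (1 + ‖p‖ ^ 2) * A * Bq * (x / p₀ * (y / p₀)) = Bq * x * (A * y) := by
    intro A Bq x y
    rw [← hs2]
    field_simp
  have hSe : ∀ m n, S m n
      = 2 * ‖p‖ ^ 2 / (1 + ‖p‖ ^ 2) * (if m = n then (1:ℝ) else 0)
        + ((d : ℝ) - 2 / (1 + ‖p‖ ^ 2)) * (p m * p n) := by
    intro m n
    have hS1 : S m n = ∑ k, ∑ l, ∑ i, ∑ j,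
        (p₀ ^ 2 * ((if k = l then (1:ℝ) else 0) - p k * p l / p₀ ^ 2) *
            ((if i = j then (1:ℝ) else 0) - p i * p j / p₀ ^ 2)) *
          (wv p l j m / p₀ * (wv p k i n / p₀)) := by
      simp only [S, Matrix.sum_apply, Matrix.smul_apply, Matrix.vecMulVec_apply, smul_eq_mul, hW]
    rw [hS1]
    calc ∑ k, ∑ l, ∑ i, ∑ j,
        (p₀ ^ 2 * ((if k = l then (1:ℝ) else 0) - p k * p l / p₀ ^ 2) *
            ((if i = j then (1:ℝ) else 0) - p i * p j / p₀ ^ 2)) *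
          (wv p l j m / p₀ * (wv p k i n / p₀))
        = ∑ k, ∑ l, ∑ i, ∑ j,
          ((if i = j then (1:ℝ) else 0) - p i * p j / (1 + ‖p‖ ^ 2)) * wv p l j m *
            (((if k = l then (1:ℝ) else 0) - p k * p l / (1 + ‖p‖ ^ 2)) * wv p k i n) := by
          refine Finset.sum_congr rfl fun k _ => Finset.sum_congr rfl fun l _ =>
            Finset.sum_congr rfl fun i _ => Finset.sum_congr rfl fun j _ => ?_
          rw [hs2]
          exact key _ _ _ _
      _ = ∑ k, ∑ l, ∑ i,
          (((if l = m then (1:ℝ) else 0) * p i + p m * p l * p i) / (1 + ‖p‖ ^ 2)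
            + (if i = m then (1:ℝ) else 0) * p l - p m * (if l = i then (1:ℝ) else 0)) *
            (((if k = l then (1:ℝ) else 0) - p k * p l / (1 + ‖p‖ ^ 2)) * wv p k i n) := by
          refine Finset.sum_congr rfl fun k _ => Finset.sum_congr rfl fun l _ =>
            Finset.sum_congr rfl fun i _ => ?_
          rw [← Finset.sum_mul, sumA]
      _ = ∑ k, ∑ i,
          (((if k = m then (1:ℝ) else 0) * p i + p m * p k * p i
              + (if i = m then (1:ℝ) else 0) * p k) / (1 + ‖p‖ ^ 2)
            - p m * (if k = i then (1:ℝ) else 0)) * wv p k i n := by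
          refine Finset.sum_congr rfl fun k _ => ?_
          rw [Finset.sum_comm]
          refine Finset.sum_congr rfl fun i _ => ?_
          have harr : ∀ l : Fin d,
              (((if l = m then (1:ℝ) else 0) * p i + p m * p l * p i) / (1 + ‖p‖ ^ 2)
                + (if i = m then (1:ℝ) else 0) * p l - p m * (if l = i then (1:ℝ) else 0)) *
                (((if k = l then (1:ℝ) else 0) - p k * p l / (1 + ‖p‖ ^ 2)) * wv p k i n)
              = (((if k = l then (1:ℝ) else 0) - p k * p l / (1 + ‖p‖ ^ 2)) *
                  (((if l = m then (1:ℝ) else 0) * p i + p m * p l * p i) / (1 + ‖p‖ ^ 2)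
                    + (if i = m then (1:ℝ) else 0) * p l - p m * (if l = i then (1:ℝ) else 0))) *
                  wv p k i n := fun l => by ring
          rw [Finset.sum_congr rfl fun l _ => harr l, ← Finset.sum_mul, sumB]
      _ = _ := sumC p m n
  have hid : S = (d : ℝ) • B - ((d : ℝ) - 2) • (1 : Matrix (Fin d) (Fin d) ℝ) - (2 / p₀ ^ 2) • B := by
    ext m n
    rw [hSe]
    simp only [Matrix.sub_apply, Matrix.smul_apply, Matrix.one_apply, smul_eq_mul, hB, hs2]
    split_ifs <;> (try field_simp) <;> (try ring)
  refine ⟨hid, ?_⟩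
  have hM : (d : ℝ) • B - S
      = ((d : ℝ) - 2) • (1 : Matrix (Fin d) (Fin d) ℝ) + (2 / p₀ ^ 2) • B := by
    rw [hid]; abel
  rw [hM]
  rw [Matrix.posSemidef_iff_dotProduct_mulVec]
  constructor
  · -- Hermitian
    ext a b
    simp only [Matrix.conjTranspose_apply, star_trivial, Matrix.add_apply, Matrix.smul_apply,
      Matrix.one_apply, smul_eq_mul, hB]
    have hsw : (if b = a then (1:ℝ) else 0) = (if a = b then (1:ℝ) else 0) := by
      by_cases h : a = b <;> simp [h, eq_comm]
    rw [hsw, mul_comm (p b) (p a)]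
  · -- quadratic form nonneg
    intro x
    have hmv : ∀ n, (((d : ℝ) - 2) • (1 : Matrix (Fin d) (Fin d) ℝ) + (2 / p₀ ^ 2) • B).mulVec x n
        = (((d : ℝ) - 2) + 2 / p₀ ^ 2) * x n + (2 / p₀ ^ 2) * p n * (∑ m, p m * x m) := by
      intro n
      simp only [Matrix.mulVec, dotProduct, Matrix.add_apply, Matrix.smul_apply,
        Matrix.one_apply, smul_eq_mul, hB]
      calc ∑ m, (((d : ℝ) - 2) * (if n = m then (1:ℝ) else 0)
              + 2 / p₀ ^ 2 * ((if n = m then (1:ℝ) else 0) + p n * p m)) * x m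
          = ∑ m, ((if n = m then (((d : ℝ) - 2) + 2 / p₀ ^ 2) * x m else 0)
              + (2 / p₀ ^ 2 * p n) * (p m * x m)) := by
            refine Finset.sum_congr rfl fun m _ => ?_
            split_ifs <;> ring
        _ = _ := by
            rw [Finset.sum_add_distrib, Finset.sum_ite_eq, ← Finset.mul_sum]
            simp only [Finset.mem_univ, if_true]
            try ring
    have hq : dotProduct (star x)
        ((((d : ℝ) - 2) • (1 : Matrix (Fin d) (Fin d) ℝ) + (2 / p₀ ^ 2) • B).mulVec x)
        = (((d : ℝ) - 2) + 2 / p₀ ^ 2) * (∑ n, x n * x n)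
          + (2 / p₀ ^ 2) * (∑ n, p n * x n) * (∑ n, p n * x n) := by
      simp only [dotProduct, star_trivial, Pi.star_apply, hmv]
      calc ∑ n, x n * ((((d : ℝ) - 2) + 2 / p₀ ^ 2) * x n
              + 2 / p₀ ^ 2 * p n * ∑ m, p m * x m)
          = ∑ n, ((((d : ℝ) - 2) + 2 / p₀ ^ 2) * (x n * x n)
              + ((2 / p₀ ^ 2) * (∑ m, p m * x m)) * (p n * x n)) :=
            Finset.sum_congr rfl fun n _ => by ring
        _ = _ := by
            rw [Finset.sum_add_distrib, ← Finset.mul_sum, ← Finset.mul_sum]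
            try ring
    rw [hq]
    have hxx : (0:ℝ) ≤ ∑ n, x n * x n := Finset.sum_nonneg fun n _ => mul_self_nonneg _
    have hc2 : (0:ℝ) < 2 / p₀ ^ 2 := by rw [hs2]; positivity
    rcases le_or_gt 2 d with hd | hd
    · have h1 : (0:ℝ) ≤ (d : ℝ) - 2 := by
        have : (2:ℝ) ≤ (d : ℝ) := by exact_mod_cast hd
        linarith
      have := mul_self_nonneg (∑ n, p n * x n)
      nlinarith
    · have hd01 : d = 0 ∨ d = 1 := by omega
      rcases hd01 with h | h
      · subst h
        simp
      · subst h
        have hnorm : ‖p‖ ^ 2 = p 0 * p 0 := by rw [← norm_sq_eq p, Fin.sum_univ_one]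
        have hval : (((1:ℕ) : ℝ) - 2 + 2 / p₀ ^ 2) * (∑ n, x n * x n)
            + (2 / p₀ ^ 2) * (∑ n, p n * x n) * (∑ n, p n * x n) = x 0 * x 0 := by
          rw [Fin.sum_univ_one, Fin.sum_univ_one, hs2, hnorm]
          have h0 : (1:ℝ) + p 0 * p 0 ≠ 0 := by nlinarith [mul_self_nonneg (p 0)]
          field_simp
          try ring
        rw [hval]
        exact mul_self_nonneg _
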